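/- Suppose a linear operator P₄ satisfies the covariance law e^{((n+3)/2)σ}·P̂₄(u) = P₄(e^{((n-1)/2)σ} u) for all u in a subspace 𝒫, and that P₄ restricted to 𝒫 equals ((n-1)/2)·P'₄ with P'₄ regular at n = 1. Then multiplying by 2/(n-1) and letting n → 1 yields e^{2σ} P̂'₄(u) = P'₄(u) + P₄(σu) for all u ∈ 𝒫, using the expansion e^{((n-1)/2)σ} - 1 = ((n-1)/2)σ + O((n-1)²) and continuity of P₄ in its argument. -/

import Mathlib

open Filter Topology

/-- Proof of the transformation law of the `P'`-operator by analytic continuation in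
the dimension: from the covariance `e^{((n+3)/2)σ} P̂₄(u) = P₄(e^{((n-1)/2)σ} u)` on `Pl`
and the factorizations `P₄ = ((n-1)/2) P₄'`, `P̂₄ = ((n-1)/2) P̂₄'` on `Pl` (regular at
`n = 1`, encoded as tendsto hypotheses), one obtains
`e^{2σ} P̂₄'(u) = P₄'(u) + P₄(σu)` for all `u ∈ Pl`. -/
theorem stmt15 {A : Type*} [NormedCommRing A] [NormedAlgebra ℝ A] [CompleteSpace A]
    (Pl : Submodule ℝ A) (σ : A)
    (P4 P4hat : ℝ → A →L[ℝ] A)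
    (P4'1 P4hat'1 : A → A)
    (hcov : ∀ (n : ℝ), ∀ u ∈ Pl,
      NormedSpace.exp (((n + 3) / 2) • σ) * P4hat n u
        = P4 n (NormedSpace.exp (((n - 1) / 2) • σ) * u))
    (hfac : ∀ u ∈ Pl,
      Tendsto (fun n : ℝ => (2 / (n - 1)) • P4 n u) (𝓝[≠] (1 : ℝ)) (𝓝 (P4'1 u)))
    (hfachat : ∀ u ∈ Pl,
      Tendsto (fun n : ℝ => (2 / (n - 1)) • P4hat n u) (𝓝[≠] (1 : ℝ)) (𝓝 (P4hat'1 u)))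
    (hjoint : Continuous fun p : ℝ × A => P4 p.1 p.2) :
    ∀ u ∈ Pl, NormedSpace.exp ((2 : ℝ) • σ) * P4hat'1 u
      = P4'1 u + P4 1 (σ * u) := by
  intro u hu
  -- derivative of t ↦ exp(t • σ) at 0
  have hderiv : Tendsto (fun t : ℝ => t⁻¹ • (NormedSpace.exp (t • σ) - 1))
      (𝓝[≠] (0 : ℝ)) (𝓝 σ) := by
    have h := hasDerivAt_exp_smul_const (𝕂 := ℝ) σ (0 : ℝ)
    rw [hasDerivAt_iff_tendsto_slope] at h
    have : (slope (fun t : ℝ => NormedSpace.exp (t • σ)) 0)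
        = fun t : ℝ => t⁻¹ • (NormedSpace.exp (t • σ) - 1) := by
      funext t
      simp [slope_def_module]
    rw [this] at h
    simpa using h
  -- map `n ↦ (n-1)/2` sends `𝓝[≠] 1` to `𝓝[≠] 0`
  have hmap : Tendsto (fun n : ℝ => (n - 1) / 2) (𝓝[≠] (1 : ℝ)) (𝓝[≠] (0 : ℝ)) := by
    apply tendsto_nhdsWithin_of_tendsto_nhds_of_eventually_within
    · have : Tendsto (fun n : ℝ => (n - 1) / 2) (𝓝 (1 : ℝ)) (𝓝 (((1:ℝ) - 1) / 2)) := by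
        exact ((continuous_id.sub continuous_const).div_const 2).tendsto 1
      simpa using this.mono_left nhdsWithin_le_nhds
    · filter_upwards [self_mem_nhdsWithin] with n hn
      have : n - 1 ≠ 0 := sub_ne_zero.2 hn
      simp [Set.mem_setOf_eq, div_eq_zero_iff, this]
  have hσ : Tendsto (fun n : ℝ => (2 / (n - 1)) • (NormedSpace.exp (((n - 1) / 2) • σ) - 1))
      (𝓝[≠] (1 : ℝ)) (𝓝 σ) := by
    have := hderiv.comp hmap
    refine this.congr fun n => ?_
    simp only [Function.comp]
    rw [inv_div]
  -- LHS limit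
  have hL : Tendsto (fun n : ℝ =>
      NormedSpace.exp (((n + 3) / 2) • σ) * ((2 / (n - 1)) • P4hat n u))
      (𝓝[≠] (1 : ℝ)) (𝓝 (NormedSpace.exp ((2 : ℝ) • σ) * P4hat'1 u)) := by
    have hexp : Tendsto (fun n : ℝ => NormedSpace.exp (((n + 3) / 2) • σ))
        (𝓝[≠] (1 : ℝ)) (𝓝 (NormedSpace.exp ((2 : ℝ) • σ))) := by
      have hc : Continuous fun n : ℝ => NormedSpace.exp (((n + 3) / 2) • σ) := by
        exact (continuous_iff_continuousAt.2 fun t => (hasDerivAt_exp_smul_const (𝕂 := ℝ) σ t).continuousAt).comp (f := fun n : ℝ => (n + 3) / 2) (by fun_prop)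
      have := hc.continuousAt (x := (1 : ℝ)).tendsto
      norm_num at this
      exact this.mono_left nhdsWithin_le_nhds
    exact hexp.mul (hfachat u hu)
  -- RHS limit
  have hR : Tendsto (fun n : ℝ =>
      (2 / (n - 1)) • P4 n u
        + P4 n ((2 / (n - 1)) • (NormedSpace.exp (((n - 1) / 2) • σ) - 1) * u))
      (𝓝[≠] (1 : ℝ)) (𝓝 (P4'1 u + P4 1 (σ * u))) := by
    refine (hfac u hu).add ?_
    have harg : Tendsto (fun n : ℝ =>
        ((n : ℝ), (2 / (n - 1)) • (NormedSpace.exp (((n - 1) / 2) • σ) - 1) * u))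
        (𝓝[≠] (1 : ℝ)) (𝓝 ((1 : ℝ), σ * u)) := by
      exact Tendsto.prodMk_nhds (tendsto_id.mono_left nhdsWithin_le_nhds)
        (hσ.mul tendsto_const_nhds)
    exact (hjoint.tendsto ((1 : ℝ), σ * u)).comp harg
  -- the two functions agree
  have heq : ∀ n : ℝ,
      NormedSpace.exp (((n + 3) / 2) • σ) * ((2 / (n - 1)) • P4hat n u)
        = (2 / (n - 1)) • P4 n u
          + P4 n ((2 / (n - 1)) • (NormedSpace.exp (((n - 1) / 2) • σ) - 1) * u) := by
    intro n
    have h1 : NormedSpace.exp (((n + 3) / 2) • σ) * ((2 / (n - 1)) • P4hat n u)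
        = (2 / (n - 1)) • (NormedSpace.exp (((n + 3) / 2) • σ) * P4hat n u) := by
      rw [mul_smul_comm]
    rw [h1, hcov n u hu]
    have h2 : NormedSpace.exp (((n - 1) / 2) • σ) * u
        = u + (NormedSpace.exp (((n - 1) / 2) • σ) - 1) * u := by ring
    rw [h2, map_add, smul_add, smul_mul_assoc, map_smul]
  have hL' := hL.congr fun n => heq n
  exact tendsto_nhds_unique hL' hR
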